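/- Let V be a c × (n−c) real matrix, G₁ = −(1/2)·V·Vᵀ, and G₀ = [[I_c + G₁, V], [Vᵀ, −I_{n−c}]]. Then G₀ is invertible. -/

import Mathlib

open Matrix

/-- `G₀ = [[I + G₁, V], [Vᵀ, -I]]` with `G₁ = -(1/2) V Vᵀ` is invertible. -/
theorem stmt2 (c n : ℕ) (hc : 0 < c) (hcn : c < n)
    (V : Matrix (Fin c) (Fin (n - c)) ℝ)
    (G₁ : Matrix (Fin c) (Fin c) ℝ) (hG₁ : G₁ = (-(1/2 : ℝ)) • (V * Vᵀ))
    (G₀ : Matrix (Fin c ⊕ Fin (n - c)) (Fin c ⊕ Fin (n - c)) ℝ)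
    (hG₀ : G₀ = fromBlocks (1 + G₁) V Vᵀ (-1)) :
    IsUnit G₀ := by
  subst hG₀ hG₁
  haveI : Invertible (-1 : Matrix (Fin (n - c)) (Fin (n - c)) ℝ) :=
    ⟨-1, by simp, by simp⟩
  rw [Matrix.isUnit_fromBlocks_iff_of_invertible₂₂]
  have hinv : (⅟(-1 : Matrix (Fin (n - c)) (Fin (n - c)) ℝ)) = -1 :=
    invOf_eq_right_inv (by simp)
  rw [hinv]
  simp only [Matrix.mul_neg, Matrix.mul_one, Matrix.neg_mul, sub_neg_eq_add]
  have hEq : 1 + (-(1/2 : ℝ)) • (V * Vᵀ) + V * Vᵀ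
      = 1 + (1/2 : ℝ) • (V * Vᵀ) := by module
  rw [hEq]
  have hpd : (1 + (1/2 : ℝ) • (V * Vᵀ)).PosDef := by
    have h1 : ((1 : Matrix (Fin c) (Fin c) ℝ)).PosDef := Matrix.PosDef.one
    have h2 : ((1/2 : ℝ) • (V * Vᵀ)).PosSemidef := by
      have h := (Matrix.posSemidef_self_mul_conjTranspose V)
      rw [conjTranspose_eq_transpose_of_trivial] at h
      refine ⟨by rw [Matrix.IsHermitian, Matrix.conjTranspose_smul, h.1]; norm_num, fun x => ?_⟩
      exact (h.smul (by norm_num : (0:ℝ) ≤ 1/2)).2 x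
    exact h1.add_posSemidef h2
  rw [Matrix.isUnit_iff_isUnit_det]
  exact (ne_of_gt hpd.det_pos).isUnit
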